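/- The Farkas kernel K₂ᶠ(x,y) = −G_{n_y n_y} + G_{τ_y τ_y} of the biharmonic Green's function G(x,y) = (1/(8π))|x−y|²log|x−y| equals (1/(2π))·(1/2 − (r·n(y))²/(r·r)), where r = y − x. -/

import Mathlib

noncomputable section
open Real MeasureTheory

/-- partial/directional derivative of `f` at `x` in direction `v`. -/
def pd (f : ℝ × ℝ → ℝ) (v x : ℝ × ℝ) : ℝ := fderiv ℝ f x v

/-- Laplacian on `ℝ²`. -/
def lap (f : ℝ × ℝ → ℝ) (x : ℝ × ℝ) : ℝ :=
  pd (fun y => pd f (1, 0) y) (1, 0) x + pd (fun y => pd f (0, 1) y) (0, 1) x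

/-- Euclidean norm on `ℝ × ℝ`. -/
def nrm (x : ℝ × ℝ) : ℝ := Real.sqrt (x.1 ^ 2 + x.2 ^ 2)

/-- Euclidean dot product on `ℝ × ℝ`. -/
def dot (a b : ℝ × ℝ) : ℝ := a.1 * b.1 + a.2 * b.2

namespace Farkas

def A (x z : ℝ × ℝ) : ℝ := (z.1 - x.1)*(z.1 - x.1) + (z.2 - x.2)*(z.2 - x.2)

def LA (x z : ℝ × ℝ) : ℝ × ℝ →L[ℝ] ℝ :=
  (2*(z.1-x.1)) • (ContinuousLinearMap.fst ℝ ℝ ℝ) + (2*(z.2-x.2)) • (ContinuousLinearMap.snd ℝ ℝ ℝ)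

lemma LA_apply (x z v : ℝ × ℝ) : LA x z v = 2*(z.1-x.1)*v.1 + 2*(z.2-x.2)*v.2 := by
  simp [LA]

lemma hasA (x z : ℝ × ℝ) : HasFDerivAt (fun w => A x w) (LA x z) z := by
  have hf : HasFDerivAt (fun w : ℝ × ℝ => w.1 - x.1) (ContinuousLinearMap.fst ℝ ℝ ℝ) z :=
    (hasFDerivAt_fst).sub_const x.1
  have hs : HasFDerivAt (fun w : ℝ × ℝ => w.2 - x.2) (ContinuousLinearMap.snd ℝ ℝ ℝ) z :=
    (hasFDerivAt_snd).sub_const x.2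
  have h := (hf.mul hf).add (hs.mul hs)
  refine HasFDerivAt.congr_fderiv (f := fun w => A x w) h ?_
  ext v <;> simp [LA] <;> ring

/-- the Green function in rational form -/
def g (x z : ℝ × ℝ) : ℝ := (1/(16*π)) * (A x z * Real.log (A x z))

lemma hasg (x z : ℝ × ℝ) (hz : A x z ≠ 0) :
    HasFDerivAt (g x) ((1/(16*π)) •
      ((A x z) • ((A x z)⁻¹ • LA x z) + Real.log (A x z) • LA x z)) z :=
  (((hasA x z).mul ((hasA x z).log hz)).const_mul (1/(16*π)))

/-- first directional derivative formula -/
def φ (x v : ℝ × ℝ) (z : ℝ × ℝ) : ℝ :=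
  (1/(16*π)) * ((Real.log (A x z) + 1) * (2*v.1*(z.1-x.1) + 2*v.2*(z.2-x.2)))

lemma fderiv_g (x z v : ℝ × ℝ) (hz : A x z ≠ 0) :
    fderiv ℝ (g x) z v = φ x v z := by
  rw [(hasg x z hz).fderiv]
  simp [LA_apply, φ]
  field_simp
  ring

lemma hasφ (x v z : ℝ × ℝ) (hz : A x z ≠ 0) :
    HasFDerivAt (φ x v) ((1/(16*π)) •
      ((Real.log (A x z) + 1) • ((2*v.1) • (ContinuousLinearMap.fst ℝ ℝ ℝ)
          + (2*v.2) • (ContinuousLinearMap.snd ℝ ℝ ℝ))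
        + (2*v.1*(z.1-x.1) + 2*v.2*(z.2-x.2)) • ((A x z)⁻¹ • LA x z))) z := by
  have h1 : HasFDerivAt (fun w => Real.log (A x w) + 1) ((A x z)⁻¹ • LA x z) z :=
    ((hasA x z).log hz).add_const 1
  have h2 : HasFDerivAt (fun w : ℝ × ℝ => 2*v.1*(w.1-x.1) + 2*v.2*(w.2-x.2))
      ((2*v.1) • (ContinuousLinearMap.fst ℝ ℝ ℝ) + (2*v.2) • (ContinuousLinearMap.snd ℝ ℝ ℝ)) z :=
    (((hasFDerivAt_fst).sub_const x.1).const_mul (2*v.1)).add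
      (((hasFDerivAt_snd).sub_const x.2).const_mul (2*v.2))
  exact (h1.mul h2).const_mul (1/(16*π))

lemma fderiv_φ (x v z : ℝ × ℝ) (hz : A x z ≠ 0) :
    fderiv ℝ (φ x v) z v =
      (1/(16*π)) * ((Real.log (A x z) + 1) * (2*v.1*v.1 + 2*v.2*v.2)
        + (2*v.1*(z.1-x.1) + 2*v.2*(z.2-x.2)) *
            ((A x z)⁻¹ * (2*(z.1-x.1)*v.1 + 2*(z.2-x.2)*v.2))) := by
  rw [(hasφ x v z hz).fderiv]
  simp [LA_apply]
  ring

end Farkas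

theorem farkas_kernel_K2 (x y : ℝ × ℝ) (hxy : x ≠ y) (n τ : ℝ × ℝ)
    (hn : n.1 ^ 2 + n.2 ^ 2 = 1) (ht : τ.1 ^ 2 + τ.2 ^ 2 = 1)
    (horth : n.1 * τ.1 + n.2 * τ.2 = 0)
    (G : ℝ × ℝ → ℝ)
    (hG : ∀ z, G z = (1 / (8 * π)) * nrm (x - z) ^ 2 * Real.log (nrm (x - z))) :
    -(fderiv ℝ (fun z => fderiv ℝ G z n) y n)
      + fderiv ℝ (fun z => fderiv ℝ G z τ) y τ
      = (1 / (2 * π)) * (1 / 2 - (dot (y - x) n) ^ 2 / dot (y - x) (y - x)) := by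
  have hA0 : Farkas.A x y ≠ 0 := by
    have h : y.1 ≠ x.1 ∨ y.2 ≠ x.2 := by
      by_contra h; push_neg at h
      exact hxy (Prod.ext_iff.mpr ⟨h.1.symm, h.2.symm⟩)
    have hpos : 0 < Farkas.A x y := by
      unfold Farkas.A
      rcases h with h | h
      · have h1 : (y.1 - x.1) ≠ 0 := sub_ne_zero.mpr h
        nlinarith [mul_self_nonneg (y.2 - x.2), mul_self_pos.mpr h1]
      · have h2 : (y.2 - x.2) ≠ 0 := sub_ne_zero.mpr h
        nlinarith [mul_self_nonneg (y.1 - x.1), mul_self_pos.mpr h2]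
    exact ne_of_gt hpos
  have hGg : G = Farkas.g x := by
    funext z
    rw [hG z, Farkas.g]
    have hAz : (x - z).1 ^ 2 + (x - z).2 ^ 2 = Farkas.A x z := by
      simp [Farkas.A]; ring
    have hnn : 0 ≤ Farkas.A x z := by
      unfold Farkas.A; nlinarith [mul_self_nonneg (z.1-x.1), mul_self_nonneg (z.2-x.2)]
    rw [nrm, hAz, Real.sq_sqrt hnn, Real.log_sqrt hnn]
    ring
  have hmem : ∀ᶠ z in nhds y, Farkas.A x z ≠ 0 := by
    have hcont : Continuous (Farkas.A x) := by unfold Farkas.A; fun_prop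
    exact hcont.continuousAt.eventually_ne hA0
  have hEvn : (fun z => fderiv ℝ G z n) =ᶠ[nhds y] Farkas.φ x n := by
    filter_upwards [hmem] with z hz
    rw [hGg]
    exact Farkas.fderiv_g x z n hz
  have hEvt : (fun z => fderiv ℝ G z τ) =ᶠ[nhds y] Farkas.φ x τ := by
    filter_upwards [hmem] with z hz
    rw [hGg]
    exact Farkas.fderiv_g x z τ hz
  rw [hEvn.fderiv_eq, hEvt.fderiv_eq, Farkas.fderiv_φ x n y hA0, Farkas.fderiv_φ x τ y hA0]
  have hdot1 : dot (y - x) n = (y.1-x.1)*n.1 + (y.2-x.2)*n.2 := by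
    simp [dot]
  have hdot2 : dot (y - x) (y - x) = Farkas.A x y := by
    simp [dot, Farkas.A]
  rw [hdot1, hdot2]
  -- orthonormal pair identities
  have hd : (n.1*τ.2 - n.2*τ.1)^2 = 1 := by
    linear_combination (τ.1^2+τ.2^2)*hn + ht - (n.1*τ.1+n.2*τ.2)*horth
  have h1 : τ.1 = -((n.1*τ.2 - n.2*τ.1)*n.2) := by
    linear_combination (-τ.1)*hn + n.1*horth
  have h2 : τ.2 = (n.1*τ.2 - n.2*τ.1)*n.1 := by
    linear_combination (-τ.2)*hn + n.2*horth
  have e1 : (y.1-x.1)*τ.1 + (y.2-x.2)*τ.2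
      = (n.1*τ.2 - n.2*τ.1)*((y.2-x.2)*n.1 - (y.1-x.1)*n.2) := by
    linear_combination (y.1-x.1)*h1 + (y.2-x.2)*h2
  have key : ((y.1-x.1)*τ.1 + (y.2-x.2)*τ.2)^2 + ((y.1-x.1)*n.1 + (y.2-x.2)*n.2)^2
      = Farkas.A x y := by
    unfold Farkas.A
    linear_combination (((y.1-x.1)*τ.1 + (y.2-x.2)*τ.2)
        + (n.1*τ.2 - n.2*τ.1)*((y.2-x.2)*n.1 - (y.1-x.1)*n.2))*e1
      + (((y.2-x.2)*n.1 - (y.1-x.1)*n.2)^2)*hd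
      + ((y.1-x.1)^2+(y.2-x.2)^2)*hn
  have hq : (2*n.1*(y.1-x.1) + 2*n.2*(y.2-x.2)) *
      ((Farkas.A x y)⁻¹ * (2*(y.1-x.1)*n.1 + 2*(y.2-x.2)*n.2))
      = 4*((y.1-x.1)*n.1 + (y.2-x.2)*n.2)^2 / Farkas.A x y := by
    rw [div_eq_mul_inv]; ring
  have hp : (2*τ.1*(y.1-x.1) + 2*τ.2*(y.2-x.2)) *
      ((Farkas.A x y)⁻¹ * (2*(y.1-x.1)*τ.1 + 2*(y.2-x.2)*τ.2))
      = 4*((y.1-x.1)*τ.1 + (y.2-x.2)*τ.2)^2 / Farkas.A x y := by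
    rw [div_eq_mul_inv]; ring
  rw [hq, hp]
  have hn2 : 2*n.1*n.1 + 2*n.2*n.2 = (2:ℝ) := by linear_combination 2*hn
  have ht2 : 2*τ.1*τ.1 + 2*τ.2*τ.2 = (2:ℝ) := by linear_combination 2*ht
  rw [hn2, ht2]
  have hp2 : ((y.1-x.1)*τ.1 + (y.2-x.2)*τ.2)^2
      = Farkas.A x y - ((y.1-x.1)*n.1 + (y.2-x.2)*n.2)^2 := by linear_combination key
  rw [hp2]
  field_simp
  ring
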